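/- Fix t ∈ (0,1). For every open set G ⊆ [0,1], liminf_{n→∞} (1/n) log P(T^n(t) ∈ G) ≥ −inf_{x∈G} I_t(x). (Large deviations lower bound for the ordered statistics process of i.i.d. uniform random variables.) -/

import Mathlib

open MeasureTheory ProbabilityTheory Filter Set Real
open scoped ENNReal NNReal Classical

/-- The `j`-th order statistic of the values `f 0, …, f (n-1)`, i.e. the `j`-th smallest
value (with the convention that the `0`-th order statistic is `0`). -/
noncomputable def orderStat (n : ℕ) (f : Fin n → ℝ) (j : ℕ) : ℝ :=
  sInf {x : ℝ | j ≤ (Finset.univ.filter fun i => f i ≤ x).card}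

/-- The ordered statistics process `T^n(t) = T_(⌊nt⌋)` built from the first `n` variables
of the sequence `T`. -/
noncomputable def osProc {Ω : Type*} (T : ℕ → Ω → ℝ) (n : ℕ) (t : ℝ) (ω : Ω) : ℝ :=
  orderStat n (fun i => T i.1 ω) ⌊(n : ℝ) * t⌋₊

/-- The rate function `I_t(x) = t log(t/x) + (1-t) log((1-t)/(1-x))` on `(0,1)`,
extended by `+∞` outside `(0,1)`. -/
noncomputable def rateI (t x : ℝ) : EReal :=
  if 0 < x ∧ x < 1 then
    ((t * Real.log (t / x) + (1 - t) * Real.log ((1 - t) / (1 - x)) : ℝ) : EReal)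
  else ⊤

section Aux

lemma term_le_max (n k : ℕ) (hk : k ≤ n) :
    ∀ m, Nat.choose n m * (k ^ m * (n - k) ^ (n - m)) ≤
      Nat.choose n k * (k ^ k * (n - k) ^ (n - k)) := by
  set f : ℕ → ℕ := fun m => Nat.choose n m * (k ^ m * (n - k) ^ (n - m)) with hf
  have hup : ∀ m, m < k → f m ≤ f (m+1) := by
    intro m hm
    have hmn : m < n := lt_of_lt_of_le hm hk
    have hpow : (n - k) ^ (n - m) = (n - k) ^ (n - (m+1)) * (n - k) := by
      rw [← pow_succ]
      congr 1
      omega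
    have key : Nat.choose n m * (n - k) ≤ Nat.choose n (m+1) * k := by
      have h1 : Nat.choose n (m+1) * (m+1) = Nat.choose n m * (n - m) :=
        Nat.choose_succ_right_eq n m
      have h2 : Nat.choose n m * (n - k) * (m+1) ≤ Nat.choose n (m+1) * k * (m+1) := by
        calc Nat.choose n m * (n - k) * (m+1)
            = Nat.choose n m * ((n - k) * (m+1)) := by ring
          _ ≤ Nat.choose n m * ((n - m) * k) := by
              apply Nat.mul_le_mul_left
              apply Nat.mul_le_mul <;> omega
          _ = Nat.choose n m * (n - m) * k := by ring
          _ = Nat.choose n (m+1) * (m+1) * k := by rw [h1]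
          _ = Nat.choose n (m+1) * k * (m+1) := by ring
      exact Nat.le_of_mul_le_mul_right h2 (Nat.succ_pos m)
    calc f m
        = (Nat.choose n m * (n - k)) * (k ^ m * (n - k) ^ (n - (m+1))) := by
          simp only [hf]; rw [hpow]; ring
      _ ≤ (Nat.choose n (m+1) * k) * (k ^ m * (n - k) ^ (n - (m+1))) :=
          Nat.mul_le_mul_right _ key
      _ = f (m+1) := by simp only [hf]; ring
  have hdown : ∀ m, k ≤ m → f (m+1) ≤ f m := by
    intro m hm
    by_cases hmn : m < n
    · have hpow : (n - k) ^ (n - m) = (n - k) ^ (n - (m+1)) * (n - k) := by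
        rw [← pow_succ]; congr 1; omega
      have key : Nat.choose n (m+1) * k ≤ Nat.choose n m * (n - k) := by
        have h1 : Nat.choose n (m+1) * (m+1) = Nat.choose n m * (n - m) :=
          Nat.choose_succ_right_eq n m
        have h2 : Nat.choose n (m+1) * k * (m+1) ≤ Nat.choose n m * (n - k) * (m+1) := by
          calc Nat.choose n (m+1) * k * (m+1)
              = Nat.choose n (m+1) * (m+1) * k := by ring
            _ = Nat.choose n m * (n - m) * k := by rw [h1]
            _ = Nat.choose n m * ((n - m) * k) := by ring
            _ ≤ Nat.choose n m * ((n - k) * (m+1)) := by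
                apply Nat.mul_le_mul_left
                apply Nat.mul_le_mul <;> omega
            _ = Nat.choose n m * (n - k) * (m+1) := by ring
        exact Nat.le_of_mul_le_mul_right h2 (Nat.succ_pos m)
      calc f (m+1)
          = (Nat.choose n (m+1) * k) * (k ^ m * (n - k) ^ (n - (m+1))) := by
            simp only [hf]; ring
        _ ≤ (Nat.choose n m * (n - k)) * (k ^ m * (n - k) ^ (n - (m+1))) :=
            Nat.mul_le_mul_right _ key
        _ = f m := by simp only [hf]; rw [hpow]; ring
    · have : Nat.choose n (m+1) = 0 := Nat.choose_eq_zero_of_lt (by omega)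
      simp [hf, this]
  have hupall : ∀ d, f (k - d) ≤ f k := by
    intro d
    induction d with
    | zero => simp
    | succ d ih =>
      by_cases hd : d < k
      · rcases Nat.lt_or_ge (k - (d+1)) k with h | h
        · have h2 : k - (d+1) + 1 = k - d := by omega
          have := hup (k - (d+1)) h
          rw [h2] at this
          exact le_trans this ih
        · have : k - (d+1) = k - d := by omega
          rw [this]; exact ih
      · have : k - (d+1) = k - d := by omega
        rw [this]; exact ih
  have hdownall : ∀ d, f (k + d) ≤ f k := by
    intro d
    induction d with
    | zero => simp
    | succ d ih =>
      have := hdown (k + d) (Nat.le_add_right _ _)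
      exact le_trans this ih
  intro m
  rcases le_or_gt m k with h | h
  · have : m = k - (k - m) := by omega
    rw [this]; exact hupall (k - m)
  · have : m = k + (m - k) := by omega
    rw [this]; exact hdownall (m - k)

lemma pow_le_choose_mul (n k : ℕ) (hk : k ≤ n) :
    n ^ n ≤ (n + 1) * (Nat.choose n k * (k ^ k * (n - k) ^ (n - k))) := by
  have hbin : n ^ n = ∑ m ∈ Finset.range (n + 1), k ^ m * (n - k) ^ (n - m) * Nat.choose n m := by
    have h := add_pow k (n - k) n
    simp only [Nat.cast_id] at h
    rw [← h, Nat.add_sub_cancel' hk]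
  rw [hbin]
  calc ∑ m ∈ Finset.range (n + 1), k ^ m * (n - k) ^ (n - m) * Nat.choose n m
      ≤ ∑ _m ∈ Finset.range (n + 1), Nat.choose n k * (k ^ k * (n - k) ^ (n - k)) := by
        apply Finset.sum_le_sum
        intro m _
        calc k ^ m * (n - k) ^ (n - m) * Nat.choose n m
            = Nat.choose n m * (k ^ m * (n - k) ^ (n - m)) := by ring
          _ ≤ _ := term_le_max n k hk m
    _ = (n + 1) * (Nat.choose n k * (k ^ k * (n - k) ^ (n - k))) := by
        rw [Finset.sum_const, Finset.card_range, smul_eq_mul]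


lemma orderStat_eq_of (n j : ℕ) (f : Fin n → ℝ) (v : ℝ) (A : Finset (Fin n)) (k : Fin n)
    (hj : 1 ≤ j) (hA : A.card = j - 1) (hk : k ∉ A)
    (hfa : ∀ i ∈ A, f i < v) (hfk : f k = v)
    (hout : ∀ i, i ∉ A → i ≠ k → v < f i) :
    orderStat n f j = v := by
  classical
  have hmem : j ≤ (Finset.univ.filter fun i => f i ≤ v).card := by
    have hsub : insert k A ⊆ Finset.univ.filter fun i => f i ≤ v := by
      intro i hi
      simp only [Finset.mem_insert] at hi
      simp only [Finset.mem_filter, Finset.mem_univ, true_and]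
      rcases hi with rfl | hi
      · exact le_of_eq hfk
      · exact (hfa i hi).le
    have hcard : (insert k A).card = j := by
      rw [Finset.card_insert_of_notMem hk, hA]
      omega
    calc j = (insert k A).card := hcard.symm
      _ ≤ _ := Finset.card_le_card hsub
  have hlb : ∀ x ∈ {x : ℝ | j ≤ (Finset.univ.filter fun i => f i ≤ x).card}, v ≤ x := by
    intro x hx
    by_contra hxv
    push_neg at hxv
    have hsub : (Finset.univ.filter fun i => f i ≤ x) ⊆ A := by
      intro i hi
      simp only [Finset.mem_filter, Finset.mem_univ, true_and] at hi
      by_contra hiA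
      rcases eq_or_ne i k with rfl | hik
      · rw [hfk] at hi; linarith
      · exact absurd hi (not_le.mpr (lt_trans hxv (hout i hiA hik)))
    have := Finset.card_le_card hsub
    rw [hA] at this
    simp only [Set.mem_setOf_eq] at hx
    omega
  exact le_antisymm (csInf_le ⟨v, hlb⟩ hmem) (le_csInf ⟨v, hmem⟩ hlb)


variable {Ω : Type*} [MeasurableSpace Ω] (P : Measure Ω) [IsProbabilityMeasure P]
    (T : ℕ → Ω → ℝ)

lemma marginal (hTmeas : ∀ i, Measurable (T i))
    (hTunif : ∀ i, Measure.map (T i) P = volume.restrict (Set.Icc (0 : ℝ) 1))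
    (i : ℕ) (c d : ℝ) (hc : 0 ≤ c) (hd : d ≤ 1) :
    P (T i ⁻¹' Set.Ioo c d) = ENNReal.ofReal (d - c) := by
  rw [← Measure.map_apply (hTmeas i) measurableSet_Ioo, hTunif i,
    Measure.restrict_apply measurableSet_Ioo]
  rcases le_or_gt d c with h | h
  · rw [Set.Ioo_eq_empty (not_lt.mpr h)]
    simp only [Set.empty_inter, measure_empty]
    exact (ENNReal.ofReal_eq_zero.mpr (by linarith)).symm
  · rw [Set.inter_eq_left.mpr (fun x hx => Set.mem_Icc.mpr
      ⟨le_of_lt (lt_of_le_of_lt hc (Set.mem_Ioo.mp hx).1),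
       le_trans (le_of_lt (Set.mem_Ioo.mp hx).2) hd⟩), Real.volume_Ioo]

lemma event_lower
    (hTmeas : ∀ i, Measurable (T i))
    (hTindep : iIndepFun T P)
    (hTunif : ∀ i, Measure.map (T i) P = volume.restrict (Set.Icc (0 : ℝ) 1))
    (n j : ℕ) (hj : 1 ≤ j) (hjn : j ≤ n)
    (a b : ℝ) (h0a : 0 < a) (hab : a < b) (hb1 : b < 1)
    (G : Set ℝ) (hG : Set.Ioo a b ⊆ G) :
    ENNReal.ofReal ((j * n.choose j : ℝ) * a ^ (j-1) * (b - a) * (1 - b) ^ (n - j)) ≤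
      P {ω | orderStat n (fun i : Fin n => T i.1 ω) j ∈ G} := by
  classical
  set sets : Finset ℕ → ℕ → ℕ → Set ℝ := fun B k i =>
    if i ∈ B.erase k then Set.Ioo 0 a else if i = k then Set.Ioo a b else Set.Ioo b 1
    with hsets
  set Ev : Finset ℕ → ℕ → Set Ω := fun B k => ⋂ i ∈ Finset.range n, T i ⁻¹' (sets B k i)
    with hEv
  have hsetsmeas : ∀ B k i, MeasurableSet (sets B k i) := by
    intro B k i
    simp only [hsets]
    split
    · exact measurableSet_Ioo
    split <;> exact measurableSet_Ioo
  have hEvmeas : ∀ B k, MeasurableSet (Ev B k) := by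
    intro B k
    exact MeasurableSet.biInter (Finset.range n).countable_toSet
      (fun i _ => (hTmeas i) (hsetsmeas B k i))
  -- the index set
  set s : Finset ((_ : Finset ℕ) × ℕ) := (Finset.powersetCard j (Finset.range n)).sigma
    (fun B => B) with hs
  have hscard : s.card = n.choose j * j := by
    rw [hs, Finset.card_sigma]
    rw [Finset.sum_congr rfl (fun B hB => (Finset.mem_powersetCard.mp hB).2)]
    rw [Finset.sum_const, Finset.card_powersetCard, Finset.card_range, smul_eq_mul]
  -- each event is contained in the target
  have hsub : ∀ p ∈ s, Ev p.1 p.2 ⊆ {ω | orderStat n (fun i : Fin n => T i.1 ω) j ∈ G} := by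
    intro p hp ω hω
    simp only [hs, Finset.mem_sigma, Finset.mem_powersetCard] at hp
    obtain ⟨⟨hBsub, hBcard⟩, hkB⟩ := hp
    obtain ⟨B, k⟩ := p
    simp only at hBsub hBcard hkB hω ⊢
    have hkn : k < n := Finset.mem_range.mp (hBsub hkB)
    simp only [hEv, Set.mem_iInter] at hω
    have hω' : ∀ i < n, T i ω ∈ sets B k i := fun i hi => hω i (Finset.mem_range.mpr hi)
    set v := T k ω with hv
    have hvmem : v ∈ Set.Ioo a b := by
      have := hω' k hkn
      simp only [hsets, Finset.notMem_erase, if_neg, if_pos rfl] at this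
      simpa using this
    set A : Finset (Fin n) := Finset.univ.filter (fun i : Fin n => (i : ℕ) ∈ B.erase k)
      with hA
    have hAcard : A.card = j - 1 := by
      have himg : A.image Fin.val = B.erase k := by
        ext m
        simp only [hA, Finset.mem_image, Finset.mem_filter, Finset.mem_univ, true_and]
        constructor
        · rintro ⟨i, hi, rfl⟩; exact hi
        · intro hm
          have hmn : m < n := Finset.mem_range.mp (hBsub (Finset.mem_of_mem_erase hm))
          exact ⟨⟨m, hmn⟩, hm, rfl⟩
      have : A.card = (B.erase k).card := by
        rw [← himg, Finset.card_image_of_injective A Fin.val_injective]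
      rw [this, Finset.card_erase_of_mem hkB, hBcard]
    have hkA : (⟨k, hkn⟩ : Fin n) ∉ A := by simp [hA]
    have hres : orderStat n (fun i : Fin n => T i.1 ω) j = v := by
      apply orderStat_eq_of n j _ v A ⟨k, hkn⟩ hj hAcard hkA
      · intro i hi
        have hiB : (i : ℕ) ∈ B.erase k := by simpa [hA] using hi
        have := hω' i i.2
        rw [hsets] at this
        simp only [if_pos hiB] at this
        exact lt_trans this.2 hvmem.1
      · rfl
      · intro i hiA hik
        have hiB : (i : ℕ) ∉ B.erase k := by simpa [hA] using hiA
        have hik' : (i : ℕ) ≠ k := fun h => hik (Fin.ext h)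
        have := hω' i i.2
        rw [hsets] at this
        simp only [if_neg hiB, if_neg hik'] at this
        exact lt_trans hvmem.2 this.1
    simp only [Set.mem_setOf_eq, hres]
    exact hG hvmem
  -- the measure of each event
  have hmeasEv : ∀ p ∈ s, P (Ev p.1 p.2) =
      ENNReal.ofReal a ^ (j-1) * ENNReal.ofReal (b - a) * ENNReal.ofReal (1 - b) ^ (n - j) := by
    intro p hp
    simp only [hs, Finset.mem_sigma, Finset.mem_powersetCard] at hp
    obtain ⟨⟨hBsub, hBcard⟩, hkB⟩ := hp
    obtain ⟨B, k⟩ := p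
    simp only at hBsub hBcard hkB ⊢
    have hindep := hTindep.measure_inter_preimage_eq_mul (Finset.range n)
      (sets := sets B k) (fun i _ => hsetsmeas B k i)
    rw [hEv]
    simp only
    rw [hindep]
    have hsplit : Finset.range n = B ∪ (Finset.range n \ B) :=
      (Finset.union_sdiff_of_subset hBsub).symm
    rw [hsplit, Finset.prod_union (Finset.disjoint_sdiff)]
    have hvalA : ∀ i ∈ B.erase k, P (T i ⁻¹' sets B k i) = ENNReal.ofReal a := by
      intro i hi
      have hseq : sets B k i = Set.Ioo 0 a := by simp only [hsets]; rw [if_pos hi]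
      rw [hseq, marginal P T hTmeas hTunif i 0 a le_rfl (by linarith), sub_zero]
    have hvalk : P (T k ⁻¹' sets B k k) = ENNReal.ofReal (b - a) := by
      have hseq : sets B k k = Set.Ioo a b := by
        simp only [hsets]; rw [if_neg (Finset.notMem_erase k B)]; simp
      rw [hseq, marginal P T hTmeas hTunif k a b (le_of_lt h0a) (le_of_lt hb1)]
    have hvalout : ∀ i ∈ Finset.range n \ B, P (T i ⁻¹' sets B k i) =
        ENNReal.ofReal (1 - b) := by
      intro i hi
      have hiB : i ∉ B := (Finset.mem_sdiff.mp hi).2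
      have h1 : i ∉ B.erase k := fun h => hiB (Finset.mem_of_mem_erase h)
      have h2 : i ≠ k := fun h => hiB (h ▸ hkB)
      have hseq : sets B k i = Set.Ioo b 1 := by simp only [hsets]; rw [if_neg h1, if_neg h2]
      rw [hseq, marginal P T hTmeas hTunif i b 1 (by linarith) le_rfl]
    have h1 : ∏ i ∈ B, P (T i ⁻¹' sets B k i) =
        ENNReal.ofReal (b - a) * ENNReal.ofReal a ^ (j - 1) := by
      rw [← Finset.mul_prod_erase B _ hkB, hvalk,
        Finset.prod_congr rfl hvalA, Finset.prod_const,
        Finset.card_erase_of_mem hkB, hBcard]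
    have h2 : ∏ i ∈ Finset.range n \ B, P (T i ⁻¹' sets B k i) =
        ENNReal.ofReal (1 - b) ^ (n - j) := by
      rw [Finset.prod_congr rfl hvalout, Finset.prod_const,
        Finset.card_sdiff_of_subset hBsub, Finset.card_range, hBcard]
    rw [h1, h2]
    ring
  -- membership pattern determines the pair
  have hclass : ∀ (B : Finset ℕ) (k : ℕ), B ⊆ Finset.range n → k ∈ B →
      ∀ ω ∈ Ev B k, ∀ i < n,
        ((i ∈ B.erase k → T i ω ∈ Set.Ioo 0 a) ∧ (i = k → T i ω ∈ Set.Ioo a b) ∧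
          (i ∉ B.erase k → i ≠ k → T i ω ∈ Set.Ioo b 1)) := by
    intro B k hBsub hkB ω hω i hi
    simp only [hEv, Set.mem_iInter] at hω
    have h := hω i (Finset.mem_range.mpr hi)
    simp only [hsets, Set.mem_preimage] at h
    refine ⟨fun h1 => ?_, fun h2 => ?_, fun h1 h2 => ?_⟩
    · rwa [if_pos h1] at h
    · rw [if_neg (h2 ▸ Finset.notMem_erase k B), if_pos h2] at h; exact h
    · rwa [if_neg h1, if_neg h2] at h
  -- disjointness
  have hdisj : (↑s : Set ((_ : Finset ℕ) × ℕ)).PairwiseDisjoint (fun p => Ev p.1 p.2) := by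
    intro p hp q hq hne
    simp only [Finset.mem_coe, hs, Finset.mem_sigma, Finset.mem_powersetCard] at hp hq
    obtain ⟨⟨hBsub, hBcard⟩, hkB⟩ := hp
    obtain ⟨⟨hBsub', hBcard'⟩, hkB'⟩ := hq
    refine Set.disjoint_left.mpr fun ω hω hω' => hne ?_
    have hc1 := hclass p.1 p.2 hBsub hkB ω hω
    have hc2 := hclass q.1 q.2 hBsub' hkB' ω hω'
    have hkn : p.2 < n := Finset.mem_range.mp (hBsub hkB)
    have hkn' : q.2 < n := Finset.mem_range.mp (hBsub' hkB')
    have hkk : p.2 = q.2 := by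
      by_contra hkk
      have h1 : T p.2 ω ∈ Set.Ioo a b := (hc1 p.2 hkn).2.1 rfl
      by_cases h2 : p.2 ∈ q.1.erase q.2
      · have := (hc2 p.2 hkn).1 h2
        exact absurd h1.1 (not_lt.mpr (le_of_lt this.2))
      · have := (hc2 p.2 hkn).2.2 h2 hkk
        exact absurd h1.2 (not_lt.mpr (le_of_lt this.1))
    have hBB : p.1 = q.1 := by
      have key : ∀ (B B' : Finset ℕ), B ⊆ Finset.range n → B' ⊆ Finset.range n →
          (k : ℕ) → k ∈ B → k ∈ B' →
          (∀ i < n, (i ∈ B.erase k → T i ω ∈ Set.Ioo 0 a) ∧ (i = k → T i ω ∈ Set.Ioo a b) ∧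
            (i ∉ B.erase k → i ≠ k → T i ω ∈ Set.Ioo b 1)) →
          (∀ i < n, (i ∈ B'.erase k → T i ω ∈ Set.Ioo 0 a) ∧ (i = k → T i ω ∈ Set.Ioo a b) ∧
            (i ∉ B'.erase k → i ≠ k → T i ω ∈ Set.Ioo b 1)) →
          B ⊆ B' := by
        intro B B' hB hB' k hk hk' hcB hcB' m hm
        by_cases hmk : m = k
        · exact hmk ▸ hk'
        · have hmn : m < n := Finset.mem_range.mp (hB hm)
          have h1 : T m ω ∈ Set.Ioo 0 a :=
            (hcB m hmn).1 (Finset.mem_erase.mpr ⟨hmk, hm⟩)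
          by_contra hm'
          have hm'' : m ∉ B'.erase k := fun h => hm' (Finset.mem_of_mem_erase h)
          have := (hcB' m hmn).2.2 hm'' hmk
          linarith [this.1, h1.2]
      have hc2' := hkk ▸ hc2
      exact le_antisymm
        (key p.1 q.1 hBsub hBsub' p.2 hkB (hkk ▸ hkB') hc1 hc2')
        (key q.1 p.1 hBsub' hBsub p.2 (hkk ▸ hkB') hkB hc2' hc1)
    exact Sigma.ext hBB (heq_of_eq_of_heq (congrArg _ rfl) (hkk ▸ HEq.rfl))
  -- assemble
  have hsum : ∑ p ∈ s, P (Ev p.1 p.2) ≤ P {ω | orderStat n (fun i : Fin n => T i.1 ω) j ∈ G} := by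
    rw [← measure_biUnion_finset hdisj (fun p _ => hEvmeas p.1 p.2)]
    exact measure_mono (Set.iUnion₂_subset hsub)
  have hc : (0:ℝ) ≤ (j * n.choose j : ℝ) := by positivity
  have hx : (0:ℝ) ≤ a ^ (j-1) := by positivity
  have hy : (0:ℝ) ≤ b - a := by linarith
  have e1 : ENNReal.ofReal ((j * n.choose j : ℝ) * a ^ (j-1) * (b - a) * (1 - b) ^ (n - j)) =
      (n.choose j * j : ℕ) *
        (ENNReal.ofReal a ^ (j-1) * ENNReal.ofReal (b - a) * ENNReal.ofReal (1 - b) ^ (n - j)) := by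
    rw [ENNReal.ofReal_mul (mul_nonneg (mul_nonneg hc hx) hy),
      ENNReal.ofReal_mul (mul_nonneg hc hx), ENNReal.ofReal_mul hc,
      ENNReal.ofReal_pow h0a.le, ENNReal.ofReal_pow (by linarith : (0:ℝ) ≤ 1 - b)]
    rw [show ((j * n.choose j : ℝ)) = ((n.choose j * j : ℕ) : ℝ) by push_cast; ring,
      ENNReal.ofReal_natCast]
    ring
  calc ENNReal.ofReal ((j * n.choose j : ℝ) * a ^ (j-1) * (b - a) * (1 - b) ^ (n - j))
      = ∑ p ∈ s, P (Ev p.1 p.2) := by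
        rw [Finset.sum_congr rfl hmeasEv, Finset.sum_const, hscard, nsmul_eq_mul, e1]
    _ ≤ _ := hsum


lemma liminf_lower {Ω : Type*} [MeasurableSpace Ω] (P : Measure Ω) [IsProbabilityMeasure P]
    (T : ℕ → Ω → ℝ)
    (hTmeas : ∀ i, Measurable (T i))
    (hTindep : iIndepFun T P)
    (hTunif : ∀ i, Measure.map (T i) P = volume.restrict (Set.Icc (0 : ℝ) 1))
    (t : ℝ) (ht0 : 0 < t) (ht1 : t < 1)
    (a b : ℝ) (h0a : 0 < a) (hab : a < b) (hb1 : b < 1)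
    (G : Set ℝ) (hG : Set.Ioo a b ⊆ G) :
    ((-(t * Real.log t + (1-t) * Real.log (1-t)) + t * Real.log a
        + (1-t) * Real.log (1-b) : ℝ) : EReal) ≤
      Filter.liminf
        (fun n : ℕ =>
          (((n : ℝ)⁻¹ : ℝ) : EReal) * ENNReal.log (P {ω | osProc T n t ω ∈ G}))
        Filter.atTop := by
  classical
  set J : ℕ → ℕ := fun n => ⌊(n : ℝ) * t⌋₊ with hJ
  set ρ : ℕ → ℝ := fun n => (J n : ℝ) / n with hρdef
  set L : ℝ := -(t * Real.log t + (1-t) * Real.log (1-t)) + t * Real.log a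
      + (1-t) * Real.log (1-b) with hL
  set u : ℕ → ℝ := fun n =>
    -(ρ n * Real.log (ρ n)) - (1 - ρ n) * Real.log (1 - ρ n)
      + (ρ n - 1/n) * Real.log a + (1 - ρ n) * Real.log (1-b)
      + (Real.log (b-a) - Real.log (n+1)) / n with hu
  -- ρ tends to t
  have hρ : Filter.Tendsto ρ Filter.atTop (nhds t) := by
    have h1 : Filter.Tendsto (fun x : ℝ => (⌊t * x⌋₊ : ℝ) / x) Filter.atTop (nhds t) :=
      tendsto_nat_floor_mul_div_atTop ht0.le
    have h2 := h1.comp (tendsto_natCast_atTop_atTop (R := ℝ))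
    apply h2.congr
    intro n
    simp only [Function.comp_apply, hρdef, hJ, mul_comm]
  -- u tends to L
  have hul : Filter.Tendsto u Filter.atTop (nhds L) := by
    have hlogρ : Filter.Tendsto (fun n => Real.log (ρ n)) Filter.atTop (nhds (Real.log t)) :=
      (Real.continuousAt_log ht0.ne').tendsto.comp hρ
    have hlogρ' : Filter.Tendsto (fun n => Real.log (1 - ρ n)) Filter.atTop
        (nhds (Real.log (1 - t))) :=
      (Real.continuousAt_log (by linarith : (1:ℝ) - t ≠ 0)).tendsto.comp
        (tendsto_const_nhds.sub hρ)
    have hinv : Filter.Tendsto (fun n : ℕ => 1/(n:ℝ)) Filter.atTop (nhds 0) :=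
      tendsto_one_div_atTop_nhds_zero_nat
    have hlogn : Filter.Tendsto (fun n : ℕ => Real.log ((n:ℝ)+1) / n) Filter.atTop (nhds 0) := by
      have h1 : Filter.Tendsto (fun x : ℝ => Real.log x / x) Filter.atTop (nhds 0) :=
        Real.isLittleO_log_id_atTop.tendsto_div_nhds_zero
      have h2 : Filter.Tendsto (fun n : ℕ => (n:ℝ)+1) Filter.atTop Filter.atTop :=
        tendsto_atTop_add_const_right _ _ tendsto_natCast_atTop_atTop
      have h3 : Filter.Tendsto (fun n : ℕ => Real.log ((n:ℝ)+1) / ((n:ℝ)+1))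
          Filter.atTop (nhds 0) := h1.comp h2
      have h4 : Filter.Tendsto (fun n : ℕ => ((n:ℝ)+1) / n) Filter.atTop (nhds 1) := by
        have : Filter.Tendsto (fun n : ℕ => 1 + 1/(n:ℝ)) Filter.atTop (nhds (1 + 0)) :=
          tendsto_const_nhds.add hinv
        rw [add_zero] at this
        apply this.congr'
        filter_upwards [Filter.eventually_gt_atTop 0] with n hn
        field_simp
      have := h3.mul h4
      rw [zero_mul] at this
      apply this.congr'
      filter_upwards [Filter.eventually_gt_atTop 0] with n hn
      have hn' : (n:ℝ) ≠ 0 := Nat.cast_ne_zero.mpr hn.ne'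
      field_simp
    have main : Filter.Tendsto u Filter.atTop
        (nhds (-(t * Real.log t) - (1-t) * Real.log (1-t) + (t - 0) * Real.log a
          + (1-t) * Real.log (1-b) + 0)) := by
      apply Filter.Tendsto.add
      apply Filter.Tendsto.add
      apply Filter.Tendsto.add
      apply Filter.Tendsto.sub
      · exact (hρ.mul hlogρ).neg
      · exact (tendsto_const_nhds.sub hρ).mul hlogρ'
      · exact ((hρ.sub hinv).mul tendsto_const_nhds)
      · exact (tendsto_const_nhds.sub hρ).mul tendsto_const_nhds
      · have : Filter.Tendsto (fun n : ℕ => Real.log (b-a) / n) Filter.atTop (nhds 0) := by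
          have := hinv.const_mul (Real.log (b-a))
          rw [mul_zero] at this
          apply this.congr
          intro n; rw [mul_one_div]
        have h5 := this.sub hlogn
        rw [sub_zero] at h5
        apply h5.congr
        intro n
        rw [div_sub_div_same]
    have heq : (-(t * Real.log t) - (1-t) * Real.log (1-t) + (t - 0) * Real.log a
          + (1-t) * Real.log (1-b) + 0) = L := by rw [hL]; ring
    rwa [heq] at main
  -- eventual comparison
  have hev : ∀ᶠ n : ℕ in Filter.atTop,
      ((u n : ℝ) : EReal) ≤
        (((n : ℝ)⁻¹ : ℝ) : EReal) * ENNReal.log (P {ω | osProc T n t ω ∈ G}) := by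
    have hJtop : Filter.Tendsto J Filter.atTop Filter.atTop := by
      apply (tendsto_nat_floor_mul_atTop t ht0).congr
      intro n
      simp only [hJ, mul_comm]
    filter_upwards [hJtop.eventually_ge_atTop 1, Filter.eventually_ge_atTop 1] with n hj1 hn1
    set j : ℕ := J n with hj
    have hn0 : (0:ℝ) < n := by exact_mod_cast hn1
    have hjltn : j < n := by
      have h1 : (j:ℝ) ≤ (n:ℝ) * t := Nat.floor_le (by positivity)
      have h2 : (n:ℝ) * t < n := by nlinarith
      exact_mod_cast lt_of_le_of_lt h1 h2
    set m : ℕ := n - j with hm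
    have hm1 : 1 ≤ m := by omega
    have hmcast : (m:ℝ) = (n:ℝ) - (j:ℝ) := by
      rw [hm]; exact_mod_cast Nat.cast_sub hjltn.le
    have hj0 : (0:ℝ) < j := by exact_mod_cast hj1
    have hm0 : (0:ℝ) < m := by exact_mod_cast hm1
    have hb0 : (0:ℝ) < b - a := by linarith
    have h1b : (0:ℝ) < 1 - b := by linarith
    have hchoose : (0:ℝ) < (n.choose j : ℝ) := by
      exact_mod_cast Nat.choose_pos hjltn.le
    set q : ℝ := ((j : ℝ) * n.choose j : ℝ) * a ^ (j-1) * (b - a) * (1 - b) ^ (n - j) with hq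
    have hq0 : 0 < q := by
      rw [hq]; positivity
    have hPge : ENNReal.ofReal q ≤ P {ω | osProc T n t ω ∈ G} := by
      have := event_lower P T hTmeas hTindep hTunif n j hj1 hjltn.le a b h0a hab hb1 G hG
      exact this
    -- the lower bound on the choose term
    set q' : ℝ := (n:ℝ)^(n:ℕ) / (((n:ℝ)+1) * ((j:ℝ)^(j:ℕ) * (m:ℝ)^(m:ℕ)))
        * (a ^ (j-1) * (b - a) * (1 - b) ^ (n - j)) with hq'
    have hq'0 : 0 < q' := by rw [hq']; positivity
    have hq'q : q' ≤ q := by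
      have hnat := pow_le_choose_mul n j hjltn.le
      have hcast : ((n:ℝ))^(n:ℕ) ≤ ((n:ℝ)+1) * ((n.choose j : ℝ) * ((j:ℝ)^(j:ℕ) * (m:ℝ)^(m:ℕ))) := by
        rw [hm]
        exact_mod_cast hnat
      have hdenom : (0:ℝ) < ((n:ℝ)+1) * ((j:ℝ)^(j:ℕ) * (m:ℝ)^(m:ℕ)) := by positivity
      have h1 : (n:ℝ)^(n:ℕ) / (((n:ℝ)+1) * ((j:ℝ)^(j:ℕ) * (m:ℝ)^(m:ℕ))) ≤ (n.choose j : ℝ) := by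
        rw [div_le_iff₀ hdenom]
        calc (n:ℝ)^(n:ℕ) ≤ ((n:ℝ)+1) * ((n.choose j : ℝ) * ((j:ℝ)^(j:ℕ) * (m:ℝ)^(m:ℕ))) := hcast
          _ = (n.choose j : ℝ) * (((n:ℝ)+1) * ((j:ℝ)^(j:ℕ) * (m:ℝ)^(m:ℕ))) := by ring
      have hj1' : (1:ℝ) ≤ (j:ℝ) := by exact_mod_cast hj1
      have h2 : (n.choose j : ℝ) ≤ (j:ℝ) * (n.choose j : ℝ) := by nlinarith
      have h3 : (0:ℝ) ≤ a ^ (j-1) * (b - a) * (1 - b) ^ (n - j) := by positivity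
      calc q' = ((n:ℝ)^(n:ℕ) / (((n:ℝ)+1) * ((j:ℝ)^(j:ℕ) * (m:ℝ)^(m:ℕ))))
            * (a ^ (j-1) * (b - a) * (1 - b) ^ (n - j)) := by rw [hq']
        _ ≤ ((j:ℝ) * (n.choose j : ℝ)) * (a ^ (j-1) * (b - a) * (1 - b) ^ (n - j)) :=
            mul_le_mul_of_nonneg_right (le_trans h1 h2) h3
        _ = q := by rw [hq]; ring
    have hlogle : Real.log q' ≤ Real.log q := Real.log_le_log hq'0 hq'q
    -- log q' explicitly
    have hjj : ((j - 1 : ℕ) : ℝ) = (j:ℝ) - 1 := by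
      rw [Nat.cast_sub hj1, Nat.cast_one]
    have hlogq' : Real.log q' = (n:ℝ) * Real.log n
        - (Real.log ((n:ℝ)+1) + ((j:ℝ) * Real.log j + (m:ℝ) * Real.log m))
        + (((j:ℝ) - 1) * Real.log a + Real.log (b-a) + (m:ℝ) * Real.log (1-b)) := by
      rw [hq', Real.log_mul (by positivity) (by positivity),
        Real.log_div (by positivity) (by positivity),
        Real.log_mul (by positivity) (by positivity),
        Real.log_mul (by positivity) (by positivity),
        Real.log_mul (by positivity) (by positivity),
        Real.log_pow, Real.log_pow, Real.log_pow, Real.log_pow]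
      rw [Real.log_mul (by positivity) (by positivity), Real.log_pow, hjj, ← hm]
    -- identity: u n = n⁻¹ * log q'
    have hρn : ρ n = (j:ℝ)/(n:ℝ) := rfl
    have h1ρ : 1 - ρ n = (m:ℝ)/(n:ℝ) := by
      rw [hρn, hmcast]
      field_simp
    have hlogρ2 : Real.log (ρ n) = Real.log j - Real.log n := by
      rw [hρn, Real.log_div hj0.ne' hn0.ne']
    have hlog1ρ2 : Real.log (1 - ρ n) = Real.log m - Real.log n := by
      rw [h1ρ, Real.log_div hm0.ne' hn0.ne']
    have huq' : u n = (n:ℝ)⁻¹ * Real.log q' := by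
      rw [hlogq']
      simp only [hu]
      rw [hlogρ2, hlog1ρ2, h1ρ, hρn, hmcast]
      field_simp
      ring
    have hureal : u n ≤ (n:ℝ)⁻¹ * Real.log q := by
      rw [huq']
      apply mul_le_mul_of_nonneg_left hlogle (by positivity)
    -- to EReal
    have hloge : ((Real.log q : ℝ) : EReal) ≤ ENNReal.log (P {ω | osProc T n t ω ∈ G}) := by
      rw [← ENNReal.log_ofReal_of_pos hq0]
      exact ENNReal.log_monotone hPge
    calc ((u n : ℝ) : EReal) ≤ (((n:ℝ)⁻¹ * Real.log q : ℝ) : EReal) := EReal.coe_le_coe_iff.mpr hureal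
      _ = (((n:ℝ)⁻¹ : ℝ) : EReal) * ((Real.log q : ℝ) : EReal) := EReal.coe_mul _ _
      _ ≤ (((n:ℝ)⁻¹ : ℝ) : EReal) * ENNReal.log (P {ω | osProc T n t ω ∈ G}) := by
          apply mul_le_mul_of_nonneg_left hloge
          exact EReal.coe_nonneg.mpr (by positivity)
  -- conclude via liminf
  have hliminfeq : Filter.liminf (fun n : ℕ => ((u n : ℝ) : EReal)) Filter.atTop = (L : EReal) :=
    (EReal.tendsto_coe.mpr hul).liminf_eq
  rw [← hliminfeq]
  exact Filter.liminf_le_liminf hev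


end Aux

/-- **LD lower bound for the ordered statistics process.** For `t ∈ (0,1)` and every
open subset `G` of `[0,1]`,
`liminf (1/n) log P(T^n(t) ∈ G) ≥ -inf_{x ∈ G} I_t(x)`. -/
theorem orderedStat_LD_lower
    {Ω : Type*} [MeasurableSpace Ω] (P : Measure Ω) [IsProbabilityMeasure P]
    (T : ℕ → Ω → ℝ)
    (hTmeas : ∀ i, Measurable (T i))
    (hTindep : iIndepFun T P)
    (hTunif : ∀ i, Measure.map (T i) P = volume.restrict (Set.Icc (0 : ℝ) 1))
    (t : ℝ) (ht : t ∈ Set.Ioo (0 : ℝ) 1)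
    (G : Set ℝ) (hGsub : G ⊆ Set.Icc (0 : ℝ) 1)
    (hGopen : IsOpen (Subtype.val ⁻¹' G : Set (Set.Icc (0 : ℝ) 1))) :
    -(⨅ x ∈ G, rateI t x) ≤
      Filter.liminf
        (fun n : ℕ =>
          (((n : ℝ)⁻¹ : ℝ) : EReal) * ENNReal.log (P {ω | osProc T n t ω ∈ G}))
        Filter.atTop := by
  obtain ⟨ht0, ht1⟩ := ht
  rw [EReal.neg_le]
  refine le_iInf₂ fun x hx => ?_
  refine EReal.neg_le_of_neg_le ?_
  by_cases hx01 : 0 < x ∧ x < 1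
  · obtain ⟨hx0, hx1⟩ := hx01
    have hrate : rateI t x =
        ((t * Real.log (t/x) + (1-t) * Real.log ((1-t)/(1-x)) : ℝ) : EReal) := by
      simp only [rateI]
      rw [if_pos ⟨hx0, hx1⟩]
    set r : ℝ := -(t * Real.log t + (1-t) * Real.log (1-t)) + t * Real.log x
        + (1-t) * Real.log (1-x) with hr
    have hneg : -(rateI t x) = ((r : ℝ) : EReal) := by
      rw [hrate, ← EReal.coe_neg]
      congr 1
      rw [hr, Real.log_div ht0.ne' hx0.ne',
        Real.log_div (by linarith : (1:ℝ) - t ≠ 0) (by linarith : (1:ℝ) - x ≠ 0)]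
      ring
    rw [hneg]
    by_contra hcon
    push_neg at hcon
    obtain ⟨d, hd1, hd2⟩ := EReal.lt_iff_exists_real_btwn.mp hcon
    have hd2' : d < r := EReal.coe_lt_coe_iff.mp hd2
    set e := (r - d)/3 with he
    have he0 : 0 < e := by rw [he]; linarith
    obtain ⟨U, hUopen, hUG⟩ := isOpen_induced_iff.mp hGopen
    have hxU : x ∈ U := by
      have : (⟨x, hGsub hx⟩ : Set.Icc (0:ℝ) 1) ∈ Subtype.val ⁻¹' U := by
        rw [hUG]; exact hx
      exact this
    obtain ⟨δ₀, hδ₀, hball⟩ := Metric.isOpen_iff.mp hUopen x hxU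
    have hc1 : ContinuousAt (fun y : ℝ => t * Real.log y) x :=
      continuousAt_const.mul (Real.continuousAt_log hx0.ne')
    have hc2 : ContinuousAt (fun y : ℝ => (1-t) * Real.log (1-y)) x :=
      continuousAt_const.mul ((Real.continuousAt_log
        (by linarith : (1:ℝ) - x ≠ 0)).comp (continuousAt_const.sub continuousAt_id))
    obtain ⟨δ₁, hδ₁, h1⟩ := Metric.continuousAt_iff.mp hc1 e he0
    obtain ⟨δ₂, hδ₂, h2⟩ := Metric.continuousAt_iff.mp hc2 e he0
    set δ := min δ₀ (min δ₁ (min δ₂ (min x (1-x)))) with hδ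
    have hδ0 : 0 < δ := by
      refine lt_min hδ₀ (lt_min hδ₁ (lt_min hδ₂ (lt_min hx0 (by linarith))))
    have hδx : δ ≤ x := le_trans (min_le_right _ _) (le_trans (min_le_right _ _)
      (le_trans (min_le_right _ _) (min_le_left _ _)))
    have hδ1x : δ ≤ 1 - x := le_trans (min_le_right _ _) (le_trans (min_le_right _ _)
      (le_trans (min_le_right _ _) (min_le_right _ _)))
    have hδδ₀ : δ ≤ δ₀ := min_le_left _ _
    have hδδ₁ : δ ≤ δ₁ := le_trans (min_le_right _ _) (min_le_left _ _)
    have hδδ₂ : δ ≤ δ₂ := le_trans (min_le_right _ _) (le_trans (min_le_right _ _)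
      (min_le_left _ _))
    set av := x - δ/2 with hav
    set bv := x + δ/2 with hbv
    have h0av : 0 < av := by rw [hav]; linarith
    have habv : av < bv := by rw [hav, hbv]; linarith
    have hbv1 : bv < 1 := by rw [hbv]; linarith
    have hIoo : Set.Ioo av bv ⊆ G := by
      intro y hy
      obtain ⟨hy1, hy2⟩ := hy
      have hyx : |y - x| < δ := by
        rw [abs_sub_lt_iff]
        constructor <;> [skip; skip] <;> simp only [hav, hbv] at hy1 hy2 <;> linarith
      have hyU : y ∈ U := hball (by rw [Metric.mem_ball, Real.dist_eq]; linarith [hyx])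
      have hyIcc : y ∈ Set.Icc (0:ℝ) 1 := by
        constructor <;> simp only [hav, hbv] at hy1 hy2 <;> linarith
      have : (⟨y, hyIcc⟩ : Set.Icc (0:ℝ) 1) ∈ Subtype.val ⁻¹' G := by
        rw [← hUG]; exact hyU
      exact this
    have hLa : t * Real.log av > t * Real.log x - e := by
      have : dist av x < δ₁ := by
        rw [Real.dist_eq, hav]
        rw [abs_sub_lt_iff]
        constructor <;> linarith
      have := h1 this
      rw [Real.dist_eq] at this
      have := abs_sub_lt_iff.mp this
      linarith [this.1, this.2]
    have hLb : (1-t) * Real.log (1-bv) > (1-t) * Real.log (1-x) - e := by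
      have : dist bv x < δ₂ := by
        rw [Real.dist_eq, hbv]
        rw [abs_sub_lt_iff]
        constructor <;> linarith
      have := h2 this
      rw [Real.dist_eq] at this
      have := abs_sub_lt_iff.mp this
      linarith [this.1, this.2]
    have main := liminf_lower P T hTmeas hTindep hTunif t ht0 ht1 av bv h0av habv hbv1 G hIoo
    have hLd : d ≤ -(t * Real.log t + (1-t) * Real.log (1-t)) + t * Real.log av
        + (1-t) * Real.log (1-bv) := by
      rw [he] at hLa hLb
      rw [hr] at hd2'
      linarith
    have : (d : EReal) ≤ Filter.liminf
        (fun n : ℕ =>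
          (((n : ℝ)⁻¹ : ℝ) : EReal) * ENNReal.log (P {ω | osProc T n t ω ∈ G}))
        Filter.atTop := le_trans (EReal.coe_le_coe_iff.mpr hLd) main
    exact absurd hd1 (not_lt.mpr this)
  · have htop : rateI t x = ⊤ := by
      simp only [rateI]
      rw [if_neg hx01]
    rw [htop]
    simp
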